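/- Let μ be a Borel probability measure on ℝⁿ with compact support and let m be an integer with 1 ≤ m ≤ n. If m ≤ D(μ), where D(μ) = inf_{θ∈(0,1)} dim_{P,θ}^n μ is the critical point of μ, then dim_P^m μ = m. -/

import Mathlib

open MeasureTheory Metric Filter Set Topology
open scoped ENNReal

noncomputable section
open scoped Classical

/-- The support of a Borel measure `μ`: the set of points all of whose
neighborhoods have positive measure. -/
def msupp {n : ℕ} (μ : Measure (EuclideanSpace ℝ (Fin n))) :
    Set (EuclideanSpace ℝ (Fin n)) :=
  {x | ∀ r : ℝ, 0 < r → 0 < μ (Metric.ball x r)}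

/-- The Assouad dimension of a set `E ⊆ ℝⁿ`: the infimum of all `s ≥ 0` for which
there is `C > 0` such that for all `0 < r < R` and `x ∈ E`, the set `E ∩ B(x,R)`
can be covered by at most `C (R/r)^s` balls of radius `r`. -/
def dimA {n : ℕ} (E : Set (EuclideanSpace ℝ (Fin n))) : ℝ :=
  sInf {s : ℝ | 0 ≤ s ∧ ∃ C : ℝ, 0 < C ∧ ∀ x ∈ E, ∀ r R : ℝ, 0 < r → r < R →
    ∃ F : Finset (EuclideanSpace ℝ (Fin n)), (F.card : ℝ) ≤ C * (R / r) ^ s ∧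
      E ∩ Metric.closedBall x R ⊆ ⋃ y ∈ F, Metric.closedBall y r}

/-- The packing dimension of a measure:
`dim_P μ = sup {t ≥ 0 : liminf_{r→0} μ(B(x,r))/r^t = 0 for μ-a.e. x}`. -/
def dimP {n : ℕ} (μ : Measure (EuclideanSpace ℝ (Fin n))) : ℝ :=
  sSup {t : ℝ | 0 ≤ t ∧ ∀ᵐ x ∂μ,
    Filter.liminf (fun r : ℝ =>
      μ (Metric.closedBall x r) / ENNReal.ofReal (r ^ t)) (𝓝[>] 0) = 0}

/-- The potential `F_m^μ(x,r) = ∫ min{1, r^m |x-y|^{-m}} dμ(y)`, with the convention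
that the integrand equals `1` when `y = x`. -/
def Fpot {n : ℕ} (m : ℝ) (μ : Measure (EuclideanSpace ℝ (Fin n)))
    (x : EuclideanSpace ℝ (Fin n)) (r : ℝ) : ℝ≥0∞ :=
  ∫⁻ y, ENNReal.ofReal (if y = x then 1 else min 1 (r ^ m * ‖x - y‖ ^ (-m))) ∂μ

/-- The `m`-dimensional packing dimension profile
`dim_P^m μ = sup {t ≥ 0 : liminf_{r→0} r^{-t} F_m^μ(x,r) = 0 for μ-a.e. x}`. -/
def dimPprofile {n : ℕ} (m : ℝ) (μ : Measure (EuclideanSpace ℝ (Fin n))) : ℝ :=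
  sSup {t : ℝ | 0 ≤ t ∧ ∀ᵐ x ∂μ,
    Filter.liminf (fun r : ℝ => Fpot m μ x r / ENNReal.ofReal (r ^ t)) (𝓝[>] 0) = 0}

/-- The potential
`F_{t,s,θ}^μ(x,r) = ∫ min{1, r^t |x-y|^{-t}, r^{θ(s-t)+t} |x-y|^{-s}} dμ(y)`,
with the convention that the integrand equals `1` when `y = x`. -/
def Ftheta {n : ℕ} (t s θ : ℝ) (μ : Measure (EuclideanSpace ℝ (Fin n)))
    (x : EuclideanSpace ℝ (Fin n)) (r : ℝ) : ℝ≥0∞ :=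
  ∫⁻ y, ENNReal.ofReal (if y = x then 1 else
    min (min 1 (r ^ t * ‖x - y‖ ^ (-t))) (r ^ (θ * (s - t) + t) * ‖x - y‖ ^ (-s))) ∂μ

/-- The `θ`-profile
`dim_{P,θ}^s μ = sup {t ∈ [0,s] : liminf_{r→0} r^{-t} F_{t,s,θ}^μ(x,r) = 0 for μ-a.e. x}`. -/
def dimPtheta {n : ℕ} (s θ : ℝ) (μ : Measure (EuclideanSpace ℝ (Fin n))) : ℝ :=
  sSup {t : ℝ | t ∈ Set.Icc 0 s ∧ ∀ᵐ x ∂μ,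
    Filter.liminf (fun r : ℝ => Ftheta t s θ μ x r / ENNReal.ofReal (r ^ t)) (𝓝[>] 0) = 0}

/-- The critical point `D(μ) = inf_{θ ∈ (0,1)} dim_{P,θ}^n μ` of a measure on `ℝⁿ`. -/
def Dcrit (n : ℕ) (μ : Measure (EuclideanSpace ℝ (Fin n))) : ℝ :=
  sInf ((fun θ : ℝ => dimPtheta (n : ℝ) θ μ) '' Set.Ioo 0 1)


namespace Statement8Aux

lemma kernel_ineq {M t' θ nR ρ r : ℝ} (hM : 0 ≤ M) (ht'0 : 0 ≤ t') (ht'n : t' ≤ nR)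
    (hθ0 : 0 < θ) (hθ1 : θ < 1) (hr0 : 0 < r) (hr1 : r ≤ 1) (hρ : 0 < ρ) :
    min 1 (r ^ M * ρ ^ (-M)) ≤
      max 1 (r ^ ((1 - θ) * (M - t'))) *
        min (min 1 (r ^ t' * ρ ^ (-t'))) (r ^ (θ * (nR - t') + t') * ρ ^ (-nR)) +
      r ^ ((1 - θ) * M) := by
  have hnR : 0 ≤ nR := ht'0.trans ht'n
  have hc1 : (1:ℝ) ≤ max 1 (r ^ ((1 - θ) * (M - t'))) := le_max_left _ _
  have hpow : ∀ a : ℝ, r ^ a * ρ ^ (-a) = (r / ρ) ^ a := fun a => by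
    rw [Real.rpow_neg hρ.le, Real.div_rpow hr0.le hρ.le, div_eq_mul_inv]
  have hq0 : 0 < r / ρ := div_pos hr0 hρ
  have hrθ : 0 < r ^ θ := Real.rpow_pos_of_pos hr0 θ
  have hlast : (0:ℝ) ≤ r ^ ((1 - θ) * M) := (Real.rpow_pos_of_pos hr0 _).le
  rcases le_or_gt ρ r with hρr | hρr
  · have hA : (1:ℝ) ≤ r ^ t' * ρ ^ (-t') := by
      rw [hpow]; exact Real.one_le_rpow ((one_le_div hρ).2 hρr) ht'0
    have hB : (1:ℝ) ≤ r ^ (θ * (nR - t') + t') * ρ ^ (-nR) := by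
      have h1 : r ^ (-nR) ≤ ρ ^ (-nR) :=
        Real.rpow_le_rpow_of_nonpos hρ hρr (neg_nonpos.2 hnR)
      have h2 : (1:ℝ) ≤ r ^ (θ * (nR - t') + t') * r ^ (-nR) := by
        rw [← Real.rpow_add hr0]
        refine Real.one_le_rpow_of_pos_of_le_one_of_nonpos hr0 hr1 ?_
        nlinarith
      exact h2.trans (by
        have := Real.rpow_pos_of_pos hr0 (θ * (nR - t') + t')
        nlinarith)
    calc min 1 (r ^ M * ρ ^ (-M)) ≤ 1 := min_le_left _ _
      _ ≤ max 1 (r ^ ((1 - θ) * (M - t'))) * min (min 1 (r ^ t' * ρ ^ (-t')))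
            (r ^ (θ * (nR - t') + t') * ρ ^ (-nR)) + r ^ ((1 - θ) * M) := by
        rw [min_eq_left hA, min_eq_left hB]
        nlinarith
  · rcases le_or_gt ρ (r ^ θ) with hρθ | hρθ
    · have hq1 : r / ρ ≤ 1 := (div_le_one hρ).2 hρr.le
      have hqlow : r ^ (1 - θ) ≤ r / ρ := by
        rw [Real.rpow_sub hr0, Real.rpow_one]
        exact div_le_div_of_nonneg_left hr0.le hρ hρθ
      have hAB : r ^ t' * ρ ^ (-t') ≤ r ^ (θ * (nR - t') + t') * ρ ^ (-nR) := by
        rw [← mul_le_mul_iff_of_pos_right (Real.rpow_pos_of_pos hρ nR)]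
        have e1 : r ^ t' * ρ ^ (-t') * ρ ^ nR = r ^ t' * ρ ^ (nR - t') := by
          rw [mul_assoc, ← Real.rpow_add hρ]; ring_nf
        have e2 : r ^ (θ * (nR - t') + t') * ρ ^ (-nR) * ρ ^ nR
            = r ^ (θ * (nR - t')) * r ^ t' := by
          rw [mul_assoc, ← Real.rpow_add hρ, Real.rpow_add hr0]
          simp [mul_comm]
        rw [e1, e2]
        have h3 : ρ ^ (nR - t') ≤ r ^ (θ * (nR - t')) := by
          calc ρ ^ (nR - t') ≤ (r ^ θ) ^ (nR - t') :=
                Real.rpow_le_rpow hρ.le hρθ (sub_nonneg.2 ht'n)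
            _ = r ^ (θ * (nR - t')) := by rw [← Real.rpow_mul hr0.le]
        calc r ^ t' * ρ ^ (nR - t') = ρ ^ (nR - t') * r ^ t' := by ring
          _ ≤ r ^ (θ * (nR - t')) * r ^ t' :=
              mul_le_mul_of_nonneg_right h3 (Real.rpow_pos_of_pos hr0 t').le
      have hA1 : r ^ t' * ρ ^ (-t') ≤ 1 := by
        rw [hpow]; exact Real.rpow_le_one hq0.le hq1 ht'0
      have hK : min (min 1 (r ^ t' * ρ ^ (-t'))) (r ^ (θ * (nR - t') + t') * ρ ^ (-nR))
          = r ^ t' * ρ ^ (-t') := by rw [min_eq_right hA1, min_eq_left hAB]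
      have hmain : r ^ M * ρ ^ (-M) ≤
          max 1 (r ^ ((1 - θ) * (M - t'))) * (r ^ t' * ρ ^ (-t')) := by
        rw [hpow, hpow]
        have hsplit : (r / ρ) ^ M = (r / ρ) ^ t' * (r / ρ) ^ (M - t') := by
          rw [← Real.rpow_add hq0]; ring_nf
        rw [hsplit]
        rcases le_total t' M with h | h
        · have h2 : (r / ρ) ^ (M - t') ≤ 1 := Real.rpow_le_one hq0.le hq1 (by linarith)
          calc (r / ρ) ^ t' * (r / ρ) ^ (M - t') ≤ (r / ρ) ^ t' * 1 :=
              mul_le_mul_of_nonneg_left h2 (Real.rpow_pos_of_pos hq0 t').le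
            _ = 1 * (r / ρ) ^ t' := by ring
            _ ≤ _ := mul_le_mul_of_nonneg_right hc1 (Real.rpow_pos_of_pos hq0 t').le
        · have h4 : (r / ρ) ^ (M - t') ≤ (r ^ (1 - θ)) ^ (M - t') :=
            Real.rpow_le_rpow_of_nonpos (Real.rpow_pos_of_pos hr0 _) hqlow (by linarith)
          have h5 : (r ^ (1 - θ)) ^ (M - t') = r ^ ((1 - θ) * (M - t')) := by
            rw [← Real.rpow_mul hr0.le]
          calc (r / ρ) ^ t' * (r / ρ) ^ (M - t')
              ≤ (r / ρ) ^ t' * r ^ ((1 - θ) * (M - t')) := by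
                refine mul_le_mul_of_nonneg_left ?_ (Real.rpow_pos_of_pos hq0 t').le
                rw [← h5]; exact h4
            _ = r ^ ((1 - θ) * (M - t')) * (r / ρ) ^ t' := by ring
            _ ≤ _ := mul_le_mul_of_nonneg_right (le_max_right _ _)
                (Real.rpow_pos_of_pos hq0 t').le
      calc min 1 (r ^ M * ρ ^ (-M)) ≤ r ^ M * ρ ^ (-M) := min_le_right _ _
        _ ≤ max 1 (r ^ ((1 - θ) * (M - t'))) * (r ^ t' * ρ ^ (-t')) := hmain
        _ ≤ _ := by rw [hK]; linarith
    · have hfar : r ^ M * ρ ^ (-M) ≤ r ^ ((1 - θ) * M) := by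
        rw [hpow]
        have hq : r / ρ ≤ r ^ (1 - θ) := by
          rw [Real.rpow_sub hr0, Real.rpow_one]
          exact div_le_div_of_nonneg_left hr0.le hrθ hρθ.le
        calc (r / ρ) ^ M ≤ (r ^ (1 - θ)) ^ M := Real.rpow_le_rpow hq0.le hq hM
          _ = r ^ ((1 - θ) * M) := by rw [← Real.rpow_mul hr0.le]
      have hKnn : 0 ≤ max 1 (r ^ ((1 - θ) * (M - t'))) *
          min (min 1 (r ^ t' * ρ ^ (-t'))) (r ^ (θ * (nR - t') + t') * ρ ^ (-nR)) := by
        refine mul_nonneg (by linarith) ?_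
        refine le_min (le_min zero_le_one ?_) ?_ <;> positivity
      calc min 1 (r ^ M * ρ ^ (-M)) ≤ r ^ M * ρ ^ (-M) := min_le_right _ _
        _ ≤ r ^ ((1 - θ) * M) := hfar
        _ ≤ _ := by linarith

lemma msupp_ae {n : ℕ} (μ : Measure (EuclideanSpace ℝ (Fin n))) :
    ∀ᵐ x ∂μ, x ∈ msupp μ := by
  rw [ae_iff]
  obtain ⟨T, hTc, hTS, hTU⟩ := TopologicalSpace.isOpen_sUnion_countable
    {u : Set (EuclideanSpace ℝ (Fin n)) | IsOpen u ∧ μ u = 0} (fun u hu => hu.1)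
  have hU : μ (⋃₀ {u : Set (EuclideanSpace ℝ (Fin n)) | IsOpen u ∧ μ u = 0}) = 0 := by
    rw [← hTU]
    exact (measure_sUnion_null_iff hTc).2 fun u hu => (hTS hu).2
  refine measure_mono_null ?_ hU
  intro x hx
  simp only [msupp, mem_setOf_eq, not_forall] at hx
  obtain ⟨r, hr, hμ⟩ := hx
  refine ⟨ball x r, ⟨isOpen_ball, ?_⟩, mem_ball_self hr⟩
  simpa using hμ

lemma exists_R0 {n : ℕ} {μ : Measure (EuclideanSpace ℝ (Fin n))}
    (hE : IsCompact (msupp μ)) :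
    ∃ R0 : ℝ, 0 < R0 ∧ ∀ x ∈ msupp μ, ∀ y ∈ msupp μ, ‖x - y‖ ≤ R0 := by
  obtain ⟨C, hC⟩ := Metric.isBounded_iff.mp hE.isBounded
  refine ⟨max C 1, lt_of_lt_of_le one_pos (le_max_right _ _), fun x hx y hy => ?_⟩
  have := hC hx hy
  rw [dist_eq_norm] at this
  exact this.trans (le_max_left _ _)

lemma meas_theta {n : ℕ} (x : EuclideanSpace ℝ (Fin n)) (t s θ r : ℝ) :
    Measurable fun y : EuclideanSpace ℝ (Fin n) =>
      ENNReal.ofReal (if y = x then (1:ℝ) else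
        min (min 1 (r ^ t * ‖x - y‖ ^ (-t))) (r ^ (θ * (s - t) + t) * ‖x - y‖ ^ (-s))) := by
  apply Measurable.ennreal_ofReal
  apply Measurable.ite (measurableSet_singleton x) measurable_const
  exact (measurable_const.min (measurable_const.mul
      ((measurable_const.sub measurable_id).norm.pow_const _))).min
    (measurable_const.mul ((measurable_const.sub measurable_id).norm.pow_const _))

lemma FpotLe {n : ℕ} (μ : Measure (EuclideanSpace ℝ (Fin n))) [IsProbabilityMeasure μ]
    (x : EuclideanSpace ℝ (Fin n)) {M t' θ nR r : ℝ} (hM : 0 ≤ M) (ht'0 : 0 ≤ t')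
    (ht'n : t' ≤ nR) (hθ0 : 0 < θ) (hθ1 : θ < 1) (hr0 : 0 < r) (hr1 : r ≤ 1) :
    Fpot M μ x r ≤ ENNReal.ofReal (max 1 (r ^ ((1 - θ) * (M - t')))) * Ftheta t' nR θ μ x r
      + ENNReal.ofReal (r ^ ((1 - θ) * M)) := by
  have hc0 : (0:ℝ) ≤ max 1 (r ^ ((1 - θ) * (M - t'))) := le_trans zero_le_one (le_max_left _ _)
  have hl0 : (0:ℝ) ≤ r ^ ((1 - θ) * M) := (Real.rpow_pos_of_pos hr0 _).le
  have key : Fpot M μ x r ≤ ∫⁻ y, (ENNReal.ofReal (max 1 (r ^ ((1 - θ) * (M - t')))) *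
      ENNReal.ofReal (if y = x then (1:ℝ) else
        min (min 1 (r ^ t' * ‖x - y‖ ^ (-t'))) (r ^ (θ * (nR - t') + t') * ‖x - y‖ ^ (-nR)))
      + ENNReal.ofReal (r ^ ((1 - θ) * M))) ∂μ := by
    refine lintegral_mono fun y => ?_
    by_cases hy : y = x
    · simp only [hy, if_pos rfl, if_pos]
      calc ENNReal.ofReal (1:ℝ)
          ≤ ENNReal.ofReal (max 1 (r ^ ((1 - θ) * (M - t')))) * ENNReal.ofReal 1 := by
            simp only [ENNReal.ofReal_one, mul_one]
            exact le_trans (by norm_num) (ENNReal.ofReal_le_ofReal (le_max_left _ _))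
        _ ≤ _ := le_self_add
    · rw [if_neg hy, if_neg hy]
      have hρ : 0 < ‖x - y‖ := by
        rw [norm_pos_iff]
        exact sub_ne_zero.2 (fun h => hy h.symm)
      have h := kernel_ineq hM ht'0 ht'n hθ0 hθ1 hr0 hr1 hρ (ρ := ‖x - y‖)
      calc ENNReal.ofReal (min 1 (r ^ M * ‖x - y‖ ^ (-M))) ≤
            ENNReal.ofReal (max 1 (r ^ ((1 - θ) * (M - t'))) *
              min (min 1 (r ^ t' * ‖x - y‖ ^ (-t'))) (r ^ (θ * (nR - t') + t') * ‖x - y‖ ^ (-nR))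
              + r ^ ((1 - θ) * M)) := ENNReal.ofReal_le_ofReal h
        _ = _ := by
            rw [ENNReal.ofReal_add _ hl0, ENNReal.ofReal_mul hc0]
            refine mul_nonneg hc0 ?_
            refine le_min (le_min zero_le_one ?_) ?_ <;> positivity
  refine key.trans ?_
  rw [lintegral_add_right _ measurable_const, lintegral_const_mul _ (meas_theta x t' nR θ r),
    lintegral_const, measure_univ, mul_one]
  exact le_refl _

lemma ofReal_div_rpow (a : ℝ≥0∞) {r : ℝ} (hr : 0 < r) (t : ℝ) :
    a / ENNReal.ofReal (r ^ t) = a * ENNReal.ofReal (r ^ (-t)) := by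
  rw [div_eq_mul_inv, ← ENNReal.ofReal_inv_of_pos (Real.rpow_pos_of_pos hr t),
    ← Real.rpow_neg hr.le]

lemma liminf_zero {n : ℕ} (μ : Measure (EuclideanSpace ℝ (Fin n))) [IsProbabilityMeasure μ]
    (x : EuclideanSpace ℝ (Fin n)) {M t t' θ : ℝ}
    (hM : 0 ≤ M) (ht0 : 0 ≤ t) (ht't : t < t') (ht'0 : 0 ≤ t') (ht'n : t' ≤ (n:ℝ))
    (hθ0 : 0 < θ) (hθ1 : θ < 1) (hε : t < (1 - θ) * M)
    (hx : Filter.liminf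
      (fun r : ℝ => Ftheta t' (n:ℝ) θ μ x r / ENNReal.ofReal (r ^ t')) (𝓝[>] 0) = 0) :
    Filter.liminf (fun r : ℝ => Fpot M μ x r / ENNReal.ofReal (r ^ t)) (𝓝[>] 0) = 0 := by
  set ε₂ : ℝ := (1 - θ) * M - t with hε₂def
  have hε₂ : 0 < ε₂ := by simp only [hε₂def]; linarith
  have claim : ∀ᶠ r in 𝓝[>] (0:ℝ),
      Fpot M μ x r / ENNReal.ofReal (r ^ t) ≤
        Ftheta t' (n:ℝ) θ μ x r / ENNReal.ofReal (r ^ t') + ENNReal.ofReal (r ^ ε₂) := by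
    have hev : ∀ᶠ r in 𝓝[>] (0:ℝ), r ∈ Ioo (0:ℝ) 1 :=
      Ioo_mem_nhdsGT_of_mem (by constructor <;> norm_num)
    filter_upwards [hev] with r hr
    obtain ⟨hr0, hr1⟩ := hr
    have hF := FpotLe μ x hM ht'0 ht'n hθ0 hθ1 hr0 hr1.le
    have hcr : max 1 (r ^ ((1 - θ) * (M - t'))) * r ^ (-t) ≤ r ^ (-t') := by
      rw [max_mul_of_nonneg _ _ (Real.rpow_pos_of_pos hr0 (-t)).le]
      refine max_le ?_ ?_
      · rw [one_mul]
        exact Real.rpow_le_rpow_of_exponent_ge hr0 hr1.le (by linarith)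
      · rw [← Real.rpow_add hr0]
        refine Real.rpow_le_rpow_of_exponent_ge hr0 hr1.le ?_
        nlinarith
    calc Fpot M μ x r / ENNReal.ofReal (r ^ t)
        = Fpot M μ x r * ENNReal.ofReal (r ^ (-t)) := ofReal_div_rpow _ hr0 t
      _ ≤ (ENNReal.ofReal (max 1 (r ^ ((1 - θ) * (M - t')))) * Ftheta t' (n:ℝ) θ μ x r
          + ENNReal.ofReal (r ^ ((1 - θ) * M))) * ENNReal.ofReal (r ^ (-t)) :=
          mul_le_mul_left hF _
      _ = Ftheta t' (n:ℝ) θ μ x r *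
            (ENNReal.ofReal (max 1 (r ^ ((1 - θ) * (M - t')))) * ENNReal.ofReal (r ^ (-t)))
          + ENNReal.ofReal (r ^ ((1 - θ) * M)) * ENNReal.ofReal (r ^ (-t)) := by ring
      _ ≤ Ftheta t' (n:ℝ) θ μ x r * ENNReal.ofReal (r ^ (-t')) + ENNReal.ofReal (r ^ ε₂) := by
          refine add_le_add (mul_le_mul_right ?_ _) (le_of_eq ?_)
          · rw [← ENNReal.ofReal_mul (le_trans zero_le_one (le_max_left _ _))]
            exact ENNReal.ofReal_le_ofReal hcr
          · rw [← ENNReal.ofReal_mul (Real.rpow_pos_of_pos hr0 _).le, ← Real.rpow_add hr0]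
            congr 1
      _ = Ftheta t' (n:ℝ) θ μ x r / ENNReal.ofReal (r ^ t') + ENNReal.ofReal (r ^ ε₂) := by
          rw [ofReal_div_rpow _ hr0 t']
  refine le_antisymm ?_ (zero_le)
  refine ENNReal.le_of_forall_pos_le_add fun ε hε' _ => ?_
  have hεne : ((ε:ℝ≥0∞)) ≠ 0 := by exact_mod_cast hε'.ne'
  have hhalf : (0:ℝ≥0∞) < (ε:ℝ≥0∞) / 2 := ENNReal.half_pos hεne
  have h1 : ∃ᶠ r in 𝓝[>] (0:ℝ),
      Ftheta t' (n:ℝ) θ μ x r / ENNReal.ofReal (r ^ t') < (ε:ℝ≥0∞) / 2 :=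
    frequently_lt_of_liminf_lt (by isBoundedDefault) (by rw [hx]; exact hhalf)
  have h2 : ∀ᶠ r in 𝓝[>] (0:ℝ), ENNReal.ofReal (r ^ ε₂) < (ε:ℝ≥0∞) / 2 := by
    have htd : Tendsto (fun r : ℝ => r ^ ε₂) (𝓝[>] (0:ℝ)) (𝓝 0) := by
      have hc := (Real.continuousAt_rpow_const 0 ε₂ (Or.inr hε₂.le)).tendsto
      rw [Real.zero_rpow hε₂.ne'] at hc
      exact hc.mono_left nhdsWithin_le_nhds
    exact (ENNReal.tendsto_ofReal htd).eventually_lt_const (by simpa using hhalf)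
  have hfreq : ∃ᶠ r in 𝓝[>] (0:ℝ),
      Fpot M μ x r / ENNReal.ofReal (r ^ t) ≤ (ε:ℝ≥0∞) := by
    refine (h1.and_eventually (h2.and claim)).mono ?_
    rintro r ⟨hH, hs, hG⟩
    calc Fpot M μ x r / ENNReal.ofReal (r ^ t)
        ≤ Ftheta t' (n:ℝ) θ μ x r / ENNReal.ofReal (r ^ t') + ENNReal.ofReal (r ^ ε₂) := hG
      _ ≤ (ε:ℝ≥0∞) / 2 + (ε:ℝ≥0∞) / 2 := add_le_add hH.le hs.le
      _ = (ε:ℝ≥0∞) := ENNReal.add_halves _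
  rw [zero_add]
  exact liminf_le_of_frequently_le hfreq

lemma upper {n : ℕ} {μ : Measure (EuclideanSpace ℝ (Fin n))} [IsProbabilityMeasure μ]
    (hE : IsCompact (msupp μ)) {M : ℝ} (hM : 0 < M) {t : ℝ}
    (hae : ∀ᵐ x ∂μ, Filter.liminf
      (fun r : ℝ => Fpot M μ x r / ENNReal.ofReal (r ^ t)) (𝓝[>] 0) = 0) :
    t ≤ M := by
  by_contra hlt
  push_neg at hlt
  obtain ⟨R0, hR0, hdiam⟩ := exists_R0 hE
  have hne : (ae μ).NeBot := ae_neBot.2 (IsProbabilityMeasure.ne_zero μ)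
  obtain ⟨x, hx0, hxsupp⟩ := (hae.and (msupp_ae μ)).exists
  set δ := min R0 1 with hδdef
  have hδ : 0 < δ := lt_min hR0 one_pos
  have hev : ∀ᶠ r in 𝓝[>] (0:ℝ), r ∈ Ioo 0 δ :=
    Ioo_mem_nhdsGT_of_mem ⟨le_refl _, hδ⟩
  have hlow : ∀ᶠ r in 𝓝[>] (0:ℝ), ENNReal.ofReal (δ ^ (M - t) / R0 ^ M) ≤
      Fpot M μ x r / ENNReal.ofReal (r ^ t) := by
    filter_upwards [hev] with r hr
    obtain ⟨hr0, hrδ⟩ := hr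
    have hrR0 : r ≤ R0 := le_of_lt (lt_of_lt_of_le hrδ (min_le_left _ _))
    have h1 : ENNReal.ofReal ((r / R0) ^ M) ≤ Fpot M μ x r := by
      have hptwise : ∀ᵐ y ∂μ, ENNReal.ofReal ((r / R0) ^ M) ≤
          ENNReal.ofReal (if y = x then 1 else min 1 (r ^ M * ‖x - y‖ ^ (-M))) := by
        filter_upwards [msupp_ae μ] with y hy
        refine ENNReal.ofReal_le_ofReal ?_
        have hbase : (r / R0) ^ M ≤ 1 :=
          Real.rpow_le_one (div_nonneg hr0.le hR0.le) ((div_le_one hR0).2 hrR0) hM.le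
        by_cases hyx : y = x
        · rw [if_pos hyx]; exact hbase
        · rw [if_neg hyx]
          have hρ : 0 < ‖x - y‖ := by
            rw [norm_pos_iff]; exact sub_ne_zero.2 fun h => hyx h.symm
          have hρR : ‖x - y‖ ≤ R0 := hdiam x hxsupp y hy
          refine le_min hbase ?_
          have e : r ^ M * ‖x - y‖ ^ (-M) = (r / ‖x - y‖) ^ M := by
            rw [Real.rpow_neg hρ.le, Real.div_rpow hr0.le hρ.le, div_eq_mul_inv]
          rw [e]
          exact Real.rpow_le_rpow (div_nonneg hr0.le hR0.le)
            (div_le_div_of_nonneg_left hr0.le hρ hρR) hM.le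
      calc ENNReal.ofReal ((r / R0) ^ M)
          = ∫⁻ _, ENNReal.ofReal ((r / R0) ^ M) ∂μ := by
            rw [lintegral_const, measure_univ, mul_one]
        _ ≤ Fpot M μ x r := lintegral_mono_ae hptwise
    have h3 : δ ^ (M - t) / R0 ^ M ≤ (r / R0) ^ M / r ^ t := by
      rw [Real.div_rpow hr0.le hR0.le, div_right_comm, ← Real.rpow_sub hr0]
      exact (div_le_div_iff_of_pos_right (Real.rpow_pos_of_pos hR0 M)).2
        (Real.rpow_le_rpow_of_nonpos hr0 hrδ.le (by linarith))
    calc ENNReal.ofReal (δ ^ (M - t) / R0 ^ M)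
        ≤ ENNReal.ofReal ((r / R0) ^ M / r ^ t) := ENNReal.ofReal_le_ofReal h3
      _ = ENNReal.ofReal ((r / R0) ^ M) / ENNReal.ofReal (r ^ t) :=
          ENNReal.ofReal_div_of_pos (Real.rpow_pos_of_pos hr0 t)
      _ ≤ Fpot M μ x r / ENNReal.ofReal (r ^ t) := ENNReal.div_le_div_right h1 _
  have hliminf := le_liminf_of_le (by isBoundedDefault) hlow
  rw [hx0] at hliminf
  have hpos : 0 < δ ^ (M - t) / R0 ^ M :=
    div_pos (Real.rpow_pos_of_pos hδ _) (Real.rpow_pos_of_pos hR0 _)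
  have heq := le_antisymm hliminf (zero_le)
  have h0 : δ ^ (M - t) / R0 ^ M ≤ 0 := ENNReal.ofReal_eq_zero.mp heq
  linarith

end Statement8Aux


/-- For a Borel probability measure `μ` with compact support on `ℝⁿ` and an
integer `1 ≤ m ≤ n`: if `m ≤ D(μ) = inf_{θ∈(0,1)} dim_{P,θ}^n μ`, then `dim_P^m μ = m`. -/

theorem statement8 (n : ℕ) (μ : Measure (EuclideanSpace ℝ (Fin n))) [IsProbabilityMeasure μ]
    (hE : IsCompact (msupp μ)) (m : ℕ) (hm : 1 ≤ m) (hmn : m ≤ n)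
    (hD : (m : ℝ) ≤ Dcrit n μ) :
    dimPprofile (m : ℝ) μ = m := by
  have hM1 : (1:ℝ) ≤ (m:ℝ) := by exact_mod_cast hm
  have hM : (0:ℝ) < (m:ℝ) := by linarith
  have hlowmem : ∀ t : ℝ, 0 ≤ t → t < (m:ℝ) →
      t ∈ {t : ℝ | 0 ≤ t ∧ ∀ᵐ x ∂μ, Filter.liminf
        (fun r : ℝ => Fpot (m:ℝ) μ x r / ENNReal.ofReal (r ^ t)) (𝓝[>] 0) = 0} := by
    intro t ht0 htM
    set θ : ℝ := ((m:ℝ) - t) / (2 * (m:ℝ)) with hθdef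
    have hθ0 : 0 < θ := div_pos (by linarith) (by linarith)
    have hθ1 : θ < 1 := by
      rw [hθdef, div_lt_one (by linarith)]; linarith
    have hεt : t < (1 - θ) * (m:ℝ) := by
      have he : (1 - ((m:ℝ) - t) / (2 * (m:ℝ))) * (m:ℝ) = ((m:ℝ) + t) / 2 := by
        field_simp; ring
      rw [hθdef, he]; linarith
    have hbdd : BddBelow ((fun θ' : ℝ => dimPtheta (n:ℝ) θ' μ) '' Set.Ioo 0 1) := by
      refine ⟨0, ?_⟩
      rintro v ⟨θ', hθ', rfl⟩
      exact Real.sSup_nonneg fun t' ht' => ht'.1.1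
    have hDθ : (m:ℝ) ≤ dimPtheta (n:ℝ) θ μ :=
      le_trans hD (csInf_le hbdd (mem_image_of_mem _ ⟨hθ0, hθ1⟩))
    have hdimθ : dimPtheta (n:ℝ) θ μ = sSup {t' : ℝ | t' ∈ Set.Icc 0 (n:ℝ) ∧ ∀ᵐ x ∂μ,
        Filter.liminf (fun r : ℝ => Ftheta t' (n:ℝ) θ μ x r / ENNReal.ofReal (r ^ t'))
          (𝓝[>] 0) = 0} := rfl
    have hSθne : {t' : ℝ | t' ∈ Set.Icc 0 (n:ℝ) ∧ ∀ᵐ x ∂μ,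
        Filter.liminf (fun r : ℝ => Ftheta t' (n:ℝ) θ μ x r / ENNReal.ofReal (r ^ t'))
          (𝓝[>] 0) = 0}.Nonempty := by
      by_contra hemp
      rw [not_nonempty_iff_eq_empty] at hemp
      rw [hdimθ, hemp, Real.sSup_empty] at hDθ
      linarith
    obtain ⟨t', ht'S, htt'⟩ := exists_lt_of_lt_csSup hSθne
      (lt_of_lt_of_le htM (le_of_le_of_eq hDθ hdimθ))
    obtain ⟨⟨ht'0, ht'n⟩, haeθ⟩ := ht'S
    refine ⟨ht0, ?_⟩
    filter_upwards [haeθ] with x hx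
    exact Statement8Aux.liminf_zero μ x hM.le ht0 htt' ht'0 ht'n hθ0 hθ1 hεt hx
  have hup : ∀ t ∈ {t : ℝ | 0 ≤ t ∧ ∀ᵐ x ∂μ, Filter.liminf
      (fun r : ℝ => Fpot (m:ℝ) μ x r / ENNReal.ofReal (r ^ t)) (𝓝[>] 0) = 0},
      t ≤ (m:ℝ) := fun t ht => Statement8Aux.upper hE hM ht.2
  have h0S := hlowmem 0 le_rfl hM
  have hbddS : BddAbove {t : ℝ | 0 ≤ t ∧ ∀ᵐ x ∂μ, Filter.liminf
      (fun r : ℝ => Fpot (m:ℝ) μ x r / ENNReal.ofReal (r ^ t)) (𝓝[>] 0) = 0} := ⟨(m:ℝ), hup⟩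
  have hdim : dimPprofile (m:ℝ) μ = sSup {t : ℝ | 0 ≤ t ∧ ∀ᵐ x ∂μ, Filter.liminf
      (fun r : ℝ => Fpot (m:ℝ) μ x r / ENNReal.ofReal (r ^ t)) (𝓝[>] 0) = 0} := rfl
  have hSup0 : (0:ℝ) ≤ sSup {t : ℝ | 0 ≤ t ∧ ∀ᵐ x ∂μ, Filter.liminf
      (fun r : ℝ => Fpot (m:ℝ) μ x r / ENNReal.ofReal (r ^ t)) (𝓝[>] 0) = 0} :=
    le_csSup hbddS h0S
  rw [hdim]
  refine le_antisymm (csSup_le ⟨0, h0S⟩ hup) ?_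
  by_contra hc
  push_neg at hc
  have htmem := hlowmem ((sSup {t : ℝ | 0 ≤ t ∧ ∀ᵐ x ∂μ, Filter.liminf
      (fun r : ℝ => Fpot (m:ℝ) μ x r / ENNReal.ofReal (r ^ t)) (𝓝[>] 0) = 0} + (m:ℝ)) / 2)
    (by linarith) (by linarith)
  have := le_csSup hbddS htmem
  linarith
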